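/- Let V and H be real Hilbert spaces with H infinite-dimensional and separable, let j : V → H be an injective compact continuous linear map with dense range, let a : V × V → ℝ be a continuous symmetric bilinear form, and let ω ∈ ℝ, c > 0 satisfy a(u,u) + ω⟨j u, j u⟩_H ≥ c‖u‖_V² for all u ∈ V. Then there exist a Hilbert (orthonormal) basis (e_k)_{k∈ℕ} of H, a sequence (ψ_k)_{k∈ℕ} in V with j ψ_k = e_k for every k, and a nondecreasing sequence of real numbers (λ_k)_{k∈ℕ} with λ_k → +∞, such that a(ψ_k, u) = λ_k ⟨e_k, j u⟩_H for all u ∈ V and all k ∈ ℕ. -/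

import Mathlib

open scoped RealInnerProductSpace
open Filter Topology

set_option linter.unusedSectionVars false
set_option linter.unusedVariables false
set_option linter.unnecessarySimpa false
set_option maxHeartbeats 1600000

section Aux
variable {H : Type*} [NormedAddCommGroup H] [InnerProductSpace ℝ H] [CompleteSpace H]

lemma aux_cs (S : H →L[ℝ] H) (hpos : ∀ x, 0 ≤ ⟪S x, x⟫) (hsym : ∀ x y, ⟪S x, y⟫ = ⟪x, S y⟫)
    (x y : H) : ⟪S x, y⟫ ^ 2 ≤ ⟪S x, x⟫ * ⟪S y, y⟫ := by
  have h : ∀ t : ℝ, 0 ≤ ⟪S y, y⟫ * (t * t) + (2 * ⟪S x, y⟫) * t + ⟪S x, x⟫ := by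
    intro t
    have h0 := hpos (x + t • y)
    have hyx : ⟪S y, x⟫ = ⟪S x, y⟫ := by rw [hsym y x, real_inner_comm]
    rw [map_add, map_smul] at h0
    simp only [inner_add_left, inner_add_right, real_inner_smul_left, real_inner_smul_right,
      smul_eq_mul] at h0
    rw [hyx] at h0
    nlinarith [h0]
  have hd := discrim_le_zero h
  rw [discrim] at hd
  nlinarith [hd]

/-- A nonzero invariant closed subspace of a compact symmetric positive-definite operator
contains a unit eigenvector with positive eigenvalue. -/
lemma aux_eigen (S : H →L[ℝ] H) (hScomp : IsCompactOperator S)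
    (hsym : ∀ x y, ⟪S x, y⟫ = ⟪x, S y⟫)
    (hstrict : ∀ x : H, x ≠ 0 → 0 < ⟪S x, x⟫)
    (K : Submodule ℝ H) (hKc : IsClosed (K : Set H))
    (hKinv : ∀ x ∈ K, S x ∈ K) (hKne : K ≠ ⊥) :
    ∃ e ∈ K, ‖e‖ = 1 ∧ ∃ μ : ℝ, 0 < μ ∧ S e = μ • e := by
  have hpos : ∀ x, 0 ≤ ⟪S x, x⟫ := by
    intro x
    rcases eq_or_ne x 0 with rfl | hx
    · simp
    · exact (hstrict x hx).le
  obtain ⟨x₀, hx₀K, hx₀⟩ := Submodule.exists_mem_ne_zero_of_ne_bot hKne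
  set e₀ : H := ‖x₀‖⁻¹ • x₀ with he₀
  have he₀1 : ‖e₀‖ = 1 := norm_smul_inv_norm hx₀
  have he₀K : e₀ ∈ K := K.smul_mem _ hx₀K
  set Q : Set ℝ := (fun x => ⟪S x, x⟫) '' {x | x ∈ K ∧ ‖x‖ = 1} with hQ
  have hQne : Q.Nonempty := ⟨_, ⟨e₀, ⟨he₀K, he₀1⟩, rfl⟩⟩
  have hQbdd : BddAbove Q := by
    refine ⟨‖S‖, ?_⟩
    rintro q ⟨y, ⟨hyK, hy1⟩, rfl⟩
    calc ⟪S y, y⟫ ≤ ‖S y‖ * ‖y‖ := real_inner_le_norm _ _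
      _ ≤ ‖S‖ * ‖y‖ * ‖y‖ := by
          have := S.le_opNorm y
          nlinarith [norm_nonneg y]
      _ = ‖S‖ := by rw [hy1]; ring
  set M : ℝ := sSup Q with hM
  have hMge : ∀ y ∈ K, ‖y‖ = 1 → ⟪S y, y⟫ ≤ M :=
    fun y hyK hy1 => le_csSup hQbdd ⟨y, ⟨hyK, hy1⟩, rfl⟩
  have hMpos : 0 < M := lt_of_lt_of_le (hstrict e₀ (by rw [← norm_ne_zero_iff, he₀1]; norm_num))
    (hMge e₀ he₀K he₀1)
  have hbound : ∀ x ∈ K, ⟪S x, x⟫ ≤ M * ‖x‖ ^ 2 := by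
    intro x hxK
    rcases eq_or_ne x 0 with rfl | hx
    · simp
    · have h1 := hMge (‖x‖⁻¹ • x) (K.smul_mem _ hxK) (norm_smul_inv_norm hx)
      rw [map_smul, real_inner_smul_left, real_inner_smul_right] at h1
      have hx0 : (0:ℝ) < ‖x‖ := norm_pos_iff.mpr hx
      have hmul := mul_le_mul_of_nonneg_left h1 (le_of_lt (mul_pos hx0 hx0))
      have h2 : ‖x‖ * ‖x‖ * (‖x‖⁻¹ * (‖x‖⁻¹ * ⟪S x, x⟫)) = ⟪S x, x⟫ := by
        field_simp
      nlinarith [hmul, h2]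
  have hSx : ∀ x ∈ K, ‖S x‖ ^ 2 ≤ M * ⟪S x, x⟫ := by
    intro x hxK
    rcases eq_or_ne (S x) 0 with h0 | h0
    · simpa [h0] using mul_nonneg hMpos.le (hpos x)
    · have hcs := aux_cs S hpos hsym x (S x)
      have h1 : ⟪S x, S x⟫ = ‖S x‖ ^ 2 := real_inner_self_eq_norm_sq (S x)
      have h2 : ⟪S (S x), S x⟫ ≤ M * ‖S x‖ ^ 2 := hbound (S x) (hKinv x hxK)
      have h3 : (0:ℝ) < ‖S x‖ ^ 2 := pow_pos (norm_pos_iff.mpr h0) 2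
      nlinarith [hpos x, hpos (S x)]
  -- approximating sequence
  have hseq : ∀ n : ℕ, ∃ x : H, x ∈ K ∧ ‖x‖ = 1 ∧ M - 1 / (n + 1) < ⟪S x, x⟫ := by
    intro n
    have hlt : M - 1 / (n + 1) < M := by
      have : (0:ℝ) < 1 / (n+1) := by positivity
      linarith
    obtain ⟨q, hq, hq2⟩ := exists_lt_of_lt_csSup hQne hlt
    obtain ⟨y, ⟨hyK, hy1⟩, rfl⟩ := hq
    exact ⟨y, hyK, hy1, hq2⟩
  choose x hxK hx1 hxlt using hseq
  -- the defect tends to zero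
  have hdef : ∀ n : ℕ, ‖S (x n) - M • x n‖ ^ 2 ≤ M * (1 / (n + 1)) := by
    intro n
    have hexp : ‖S (x n) - M • x n‖ ^ 2
        = ‖S (x n)‖ ^ 2 - 2 * (M * ⟪S (x n), x n⟫) + M ^ 2 := by
      rw [norm_sub_sq_real, real_inner_smul_right, norm_smul, hx1 n, Real.norm_eq_abs,
        abs_of_pos hMpos, mul_one]
    rw [hexp]
    have h1 := hSx (x n) (hxK n)
    have h2 := hxlt n
    have h3 := hMge (x n) (hxK n) (hx1 n)
    nlinarith
  have hdefto : Tendsto (fun n : ℕ => S (x n) - M • x n) atTop (𝓝 0) := by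
    rw [tendsto_zero_iff_norm_tendsto_zero]
    have hsq : Tendsto (fun n : ℕ => ‖S (x n) - M • x n‖ ^ 2) atTop (𝓝 0) := by
      apply squeeze_zero (fun n => sq_nonneg _) hdef
      have : Tendsto (fun n : ℕ => 1 / ((n:ℝ) + 1)) atTop (𝓝 0) := tendsto_one_div_add_atTop_nhds_zero_nat
      simpa using this.const_mul M
    have := (Real.continuous_sqrt.tendsto 0).comp hsq
    simp only [Real.sqrt_zero, Function.comp_def] at this
    convert this using 2 with n
    rw [Real.sqrt_sq (norm_nonneg _)]
  -- compactness: extract convergent subsequence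
  obtain ⟨C, hC, hCmem⟩ := hScomp
  obtain ⟨r, hr, hball⟩ := Metric.mem_nhds_iff.mp hCmem
  have hmem : ∀ n : ℕ, S ((r/2) • x n) ∈ C := by
    intro n
    apply hball
    rw [Metric.mem_ball, dist_zero_right, norm_smul, hx1 n, Real.norm_eq_abs,
      abs_of_pos (by linarith)]
    linarith
  obtain ⟨z', _, φ, hφ, hconv⟩ := hC.tendsto_subseq hmem
  have hSconv : Tendsto (fun n : ℕ => S (x (φ n))) atTop (𝓝 ((2/r) • z')) := by
    have := hconv.const_smul (2/r : ℝ)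
    simp only [Function.comp_def, map_smul, smul_smul] at this ⊢
    have hrr : (2/r) * (r/2) = 1 := by field_simp
    simpa [hrr] using this
  set z : H := (2/r) • z' with hz
  have hMx : Tendsto (fun n : ℕ => M • x (φ n)) atTop (𝓝 z) := by
    have h1 : Tendsto (fun n : ℕ => S (x (φ n)) - (S (x (φ n)) - M • x (φ n))) atTop (𝓝 (z - 0)) :=
      hSconv.sub (hdefto.comp hφ.tendsto_atTop)
    simpa using h1
  have hxconv : Tendsto (fun n : ℕ => x (φ n)) atTop (𝓝 (M⁻¹ • z)) := by
    have := hMx.const_smul (M⁻¹ : ℝ)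
    simp only [smul_smul, inv_mul_cancel₀ hMpos.ne', one_smul] at this
    exact this
  set e : H := M⁻¹ • z with he
  have heK : e ∈ K := hKc.mem_of_tendsto hxconv (Eventually.of_forall fun n => hxK (φ n))
  have he1 : ‖e‖ = 1 := by
    have h1 : Tendsto (fun n : ℕ => ‖x (φ n)‖) atTop (𝓝 ‖e‖) := hxconv.norm
    have h2 : Tendsto (fun n : ℕ => ‖x (φ n)‖) atTop (𝓝 1) := by
      have hfe : (fun n : ℕ => ‖x (φ n)‖) = fun _ => (1:ℝ) := funext fun n => hx1 (φ n)
      rw [hfe]; exact tendsto_const_nhds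
    exact tendsto_nhds_unique h1 h2
  have hSe : S e = z := by
    have h1 : Tendsto (fun n : ℕ => S (x (φ n))) atTop (𝓝 (S e)) :=
      (S.continuous.tendsto e).comp hxconv
    exact tendsto_nhds_unique h1 hSconv
  refine ⟨e, heK, he1, M, hMpos, ?_⟩
  rw [hSe, he, smul_smul, mul_inv_cancel₀ hMpos.ne', one_smul]



/-- Eigenvalues of a compact operator on an orthonormal family: only finitely many above ε. -/
lemma aux_finite (S : H →L[ℝ] H) (hScomp : IsCompactOperator S)
    (e : ℕ → H) (hon : Orthonormal ℝ e) (μ : ℕ → ℝ)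
    (heig : ∀ k, S (e k) = μ k • e k) :
    ∀ ε : ℝ, 0 < ε → {k : ℕ | ε ≤ μ k}.Finite := by
  intro ε hε
  by_contra hfin'
  have hfin : Set.Infinite {k : ℕ | ε ≤ μ k} := hfin'
  set ψ : ℕ → ℕ := fun n => ((Set.Infinite.natEmbedding _ hfin) n : ℕ) with hψdef
  have hψinj : Function.Injective ψ := fun m n h => (Set.Infinite.natEmbedding _ hfin).injective (Subtype.ext h)
  have hψmem : ∀ n, ε ≤ μ (ψ n) := fun n => ((Set.Infinite.natEmbedding _ hfin) n).2
  obtain ⟨C, hC, hCmem⟩ := hScomp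
  obtain ⟨r, hr, hball⟩ := Metric.mem_nhds_iff.mp hCmem
  set p : ℕ → H := fun n => S ((r/2) • e (ψ n)) with hp
  have hmem : ∀ n, p n ∈ C := by
    intro n
    apply hball
    rw [Metric.mem_ball, dist_zero_right, norm_smul, Real.norm_eq_abs,
      abs_of_pos (by linarith : (0:ℝ) < r/2), hon.1 (ψ n)]
    linarith
  obtain ⟨z, _, φ, hφ, hconv⟩ := hC.tendsto_subseq hmem
  have hcs : CauchySeq (p ∘ φ) := hconv.cauchySeq
  obtain ⟨N, hN⟩ := Metric.cauchySeq_iff.mp hcs ((r/2) * ε) (by positivity)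
  have hd := hN (N+1) (by omega) N (by omega)
  have hne : ψ (φ (N+1)) ≠ ψ (φ N) := fun h => (hφ (Nat.lt_succ_self N)).ne' (hψinj h)
  -- distance between distinct scaled eigenvectors is large
  have hdist : ∀ m n : ℕ, ψ m ≠ ψ n → (r/2) * ε ≤ dist (p m) (p n) := by
    intro m n hmn
    have hinner : ⟪e (ψ m), e (ψ n)⟫ = 0 := by
      have := orthonormal_iff_ite.mp hon (ψ m) (ψ n)
      simpa [hmn] using this
    have hnorm : ∀ k, ‖e k‖ = 1 := hon.1
    rw [hp]
    simp only [map_smul]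
    rw [heig, heig, dist_eq_norm, ← smul_sub, norm_smul, Real.norm_eq_abs,
      abs_of_pos (by linarith : (0:ℝ) < r/2)]
    have hsq : ‖μ (ψ m) • e (ψ m) - μ (ψ n) • e (ψ n)‖ ^ 2 = μ (ψ m) ^ 2 + μ (ψ n) ^ 2 := by
      rw [norm_sub_sq_real, real_inner_smul_left, real_inner_smul_right, hinner,
        norm_smul, norm_smul, hnorm, hnorm]
      simp [Real.norm_eq_abs, mul_pow, sq_abs]
    have h1 : ε ≤ ‖μ (ψ m) • e (ψ m) - μ (ψ n) • e (ψ n)‖ := by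
      nlinarith [norm_nonneg (μ (ψ m) • e (ψ m) - μ (ψ n) • e (ψ n)), hψmem m, hψmem n,
        sq_nonneg (μ (ψ m) - μ (ψ n))]
    nlinarith [h1, hr]
  exact absurd hd (not_lt.mpr (hdist (φ (N+1)) (φ N) hne))

/-- Sorting a positive sequence with finitely many large values into nonincreasing order. -/
lemma aux_sort (μ : ℕ → ℝ) (hpos : ∀ k, 0 < μ k)
    (hfin : ∀ ε : ℝ, 0 < ε → {k : ℕ | ε ≤ μ k}.Finite) :
    ∃ F : ℕ → ℕ, Function.Bijective F ∧ Antitone (fun k => μ (F k)) ∧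
      Tendsto (fun k => μ (F k)) atTop (𝓝 0) := by
  have hnext : ∀ s : Finset ℕ, ∃ m : ℕ, m ∉ s ∧ ∀ n, n ∉ s → μ n ≤ μ m := by
    intro s
    obtain ⟨x, hx⟩ := Infinite.exists_notMem_finset s
    classical
    set B : Finset ℕ := (hfin (μ x) (hpos x)).toFinset.filter (fun n => n ∉ s) with hB
    have hxB : x ∈ B := by
      rw [hB, Finset.mem_filter, Set.Finite.mem_toFinset]
      exact ⟨Set.mem_setOf.mpr (le_refl _), hx⟩
    obtain ⟨m, hmB, hmax⟩ := B.exists_max_image μ ⟨x, hxB⟩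
    have hmns : m ∉ s := (Finset.mem_filter.mp hmB).2
    refine ⟨m, hmns, fun n hn => ?_⟩
    by_cases hcase : μ x ≤ μ n
    · exact hmax n (by rw [hB, Finset.mem_filter, Set.Finite.mem_toFinset]; exact ⟨hcase, hn⟩)
    · exact le_trans (le_of_not_ge hcase) (hmax x hxB)
  choose next hnext1 hnext2 using hnext
  classical
  let G : ℕ → Finset ℕ := fun k => Nat.rec ∅ (fun _ s => insert (next s) s) k
  let F : ℕ → ℕ := fun k => next (G k)
  have hGs : ∀ k, G (k+1) = insert (F k) (G k) := fun _ => rfl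
  have hGmono : ∀ k, G k ⊆ G (k+1) := fun k => by rw [hGs k]; exact Finset.subset_insert _ _
  have hGle : ∀ {j k : ℕ}, j ≤ k → G j ⊆ G k := by
    intro j k hjk
    induction k with
    | zero => simp_all
    | succ k ih =>
      rcases Nat.lt_succ_iff_lt_or_eq.mp (Nat.lt_succ_of_le hjk) with h | h
      · exact (ih (Nat.lt_succ_iff.mp h)).trans (hGmono k)
      · subst h; exact Finset.Subset.refl _
  have hmemG : ∀ j k, j < k → F j ∈ G k := by
    intro j k hjk
    have h1 : F j ∈ G (j+1) := by rw [hGs j]; exact Finset.mem_insert_self _ _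
    exact hGle hjk h1
  have hGmem : ∀ k m, m ∈ G k → ∃ j, j < k ∧ F j = m := by
    intro k
    induction k with
    | zero => intro m hm; simp [G] at hm
    | succ k ih =>
      intro m hm
      rw [hGs k, Finset.mem_insert] at hm
      rcases hm with h | h
      · exact ⟨k, Nat.lt_succ_self k, h.symm⟩
      · obtain ⟨j, hj, hj2⟩ := ih m h
        exact ⟨j, Nat.lt_succ_of_lt hj, hj2⟩
  have hFnot : ∀ k, F k ∉ G k := fun k => hnext1 (G k)
  have hFinj : Function.Injective F := by
    intro j k hjk
    by_contra hne
    rcases Nat.lt_or_ge j k with h | h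
    · exact hFnot k (hjk ▸ hmemG j k h)
    · have : k < j := lt_of_le_of_ne h (Ne.symm hne)
      exact hFnot j (hjk ▸ hmemG k j this)
  have hanti : Antitone (fun k => μ (F k)) := by
    apply antitone_nat_of_succ_le
    intro k
    have h1 : F (k+1) ∉ G k := fun h => hFnot (k+1) (hGmono k h)
    exact hnext2 (G k) (F (k+1)) h1
  have hFsurj : Function.Surjective F := by
    intro m
    by_contra hm
    push_neg at hm
    have hmnot : ∀ k, m ∉ G k := by
      intro k hk
      obtain ⟨j, _, hj⟩ := hGmem k m hk
      exact hm j hj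
    have hge : ∀ k, μ m ≤ μ (F k) := fun k => hnext2 (G k) m (hmnot k)
    have : Set.Infinite {n : ℕ | μ m ≤ μ n} :=
      Set.infinite_of_injective_forall_mem hFinj (fun k => hge k)
    exact this (hfin (μ m) (hpos m))
  refine ⟨F, ⟨hFinj, hFsurj⟩, hanti, ?_⟩
  apply tendsto_order.2
  constructor
  · intro b hb
    exact Eventually.of_forall fun k => lt_trans hb (hpos (F k))
  · intro b hb
    have hfinb : {k : ℕ | b ≤ μ (F k)}.Finite := by
      have : {k : ℕ | b ≤ μ (F k)} = F ⁻¹' {n : ℕ | b ≤ μ n} := rfl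
      rw [this]
      exact Set.Finite.preimage hFinj.injOn (hfin b hb)
    obtain ⟨N, hN⟩ := hfinb.bddAbove
    rw [eventually_atTop]
    refine ⟨N+1, fun k hk => ?_⟩
    by_contra hcon
    have : k ∈ {k : ℕ | b ≤ μ (F k)} := le_of_not_gt hcon
    have := hN this
    omega

end Aux

/-- Abstract discrete spectrum (core of Theorem A.3): an `H`-elliptic
continuous symmetric bilinear form `a` on `V`, with `j : V → H` compact,
injective and with dense range, and `H` infinite-dimensional separable,
admits an orthonormal (Hilbert) basis `(e_k)` of `H` of eigenvectors
`e_k = j ψ_k` with nondecreasing eigenvalues `λ_k → +∞`: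
`a(ψ_k, u) = λ_k ⟨e_k, j u⟩` for all `u`. -/
theorem stmt5 {V H : Type*}
    [NormedAddCommGroup V] [InnerProductSpace ℝ V] [CompleteSpace V]
    [NormedAddCommGroup H] [InnerProductSpace ℝ H] [CompleteSpace H]
    [TopologicalSpace.SeparableSpace H] (hinf : ¬ FiniteDimensional ℝ H)
    (j : V →L[ℝ] H) (hjcompact : IsCompactOperator j)
    (hjinj : Function.Injective j) (hjdense : DenseRange j)
    (a : V →L[ℝ] V →L[ℝ] ℝ) (hsymm : ∀ u v : V, a u v = a v u)
    (ω c : ℝ) (hc : 0 < c)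
    (hell : ∀ u : V, c * ‖u‖ ^ 2 ≤ a u u + ω * ⟪j u, j u⟫) :
    ∃ (e : HilbertBasis ℕ ℝ H) (ψ : ℕ → V) (Λ : ℕ → ℝ),
      Monotone Λ ∧ Filter.Tendsto Λ Filter.atTop Filter.atTop ∧
      ∀ k : ℕ, j (ψ k) = e k ∧
        ∀ u : V, a (ψ k) u = Λ k * ⟪e k, j u⟫ := by
  classical
  -- the continuous bilinear map (u,v) ↦ ⟪j u, j v⟫
  set q : V →L[ℝ] V →L[ℝ] ℝ := LinearMap.mkContinuous₂
    (LinearMap.mk₂ ℝ (fun u v => ⟪j u, j v⟫)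
      (fun u u' v => by simp [inner_add_left])
      (fun r u v => by simp [real_inner_smul_left])
      (fun u v v' => by simp [inner_add_right])
      (fun r u v => by simp [real_inner_smul_right]))
    (‖j‖ * ‖j‖)
    (fun u v => by
      simp only [LinearMap.mk₂_apply, Real.norm_eq_abs]
      calc |⟪j u, j v⟫| ≤ ‖j u‖ * ‖j v‖ := abs_real_inner_le_norm _ _
        _ ≤ (‖j‖ * ‖u‖) * (‖j‖ * ‖v‖) := by
            gcongr
            · exact j.le_opNorm u
            · exact j.le_opNorm v
        _ = ‖j‖ * ‖j‖ * ‖u‖ * ‖v‖ := by ring) with hqdef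
  have hqapp : ∀ u v : V, q u v = ⟪j u, j v⟫ := fun u v => rfl
  -- the shifted bilinear form
  set B : V →L[ℝ] V →L[ℝ] ℝ := a + ω • q with hBdef
  have hBapp : ∀ u v : V, B u v = a u v + ω * ⟪j u, j v⟫ := fun u v => rfl
  have hBsymm : ∀ u v : V, B u v = B v u := by
    intro u v
    rw [hBapp, hBapp, hsymm, real_inner_comm]
  have hBcoer : IsCoercive B := by
    refine ⟨c, hc, fun u => ?_⟩
    have := hell u
    rw [hBapp]
    nlinarith [this, sq_nonneg ‖u‖]
  set E := hBcoer.continuousLinearEquivOfBilin with hEdef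
  have hE : ∀ u w : V, ⟪E u, w⟫ = B u w := fun u w =>
    hBcoer.continuousLinearEquivOfBilin_apply u w
  set T : H →L[ℝ] V := (E.symm : V →L[ℝ] V).comp (ContinuousLinearMap.adjoint j) with hTdef
  have hTapp : ∀ f : H, T f = E.symm (ContinuousLinearMap.adjoint j f) := fun f => rfl
  have hET : ∀ f : H, E (T f) = ContinuousLinearMap.adjoint j f := by
    intro f; rw [hTapp]; exact E.apply_symm_apply _
  have hT : ∀ (f : H) (v : V), B (T f) v = ⟪f, j v⟫ := by
    intro f v
    rw [← hE, hET, ContinuousLinearMap.adjoint_inner_left]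
  set S : H →L[ℝ] H := j.comp T with hSdef
  have hSapp : ∀ f : H, S f = j (T f) := fun f => rfl
  have hScomp : IsCompactOperator S := by
    have := hjcompact.comp_clm T
    exact this
  have hSB : ∀ f g : H, ⟪S f, g⟫ = B (T f) (T g) := by
    intro f g
    rw [hSapp, ← ContinuousLinearMap.adjoint_inner_right, ← hET, real_inner_comm, hE, hBsymm]
  have hSsym : ∀ f g : H, ⟪S f, g⟫ = ⟪f, S g⟫ := by
    intro f g
    rw [hSB, hBsymm, ← hSB, real_inner_comm]
  have hTne : ∀ f : H, f ≠ 0 → T f ≠ 0 := by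
    intro f hf hTf
    have hadj : ContinuousLinearMap.adjoint j f = 0 := by
      rw [← hET, hTf, map_zero]
    have h0 : ∀ x : H, ⟪f, x⟫ = 0 := by
      intro x
      refine hjdense.induction_on x ?_ ?_
      · exact isClosed_eq (innerSL ℝ f).continuous continuous_const
      · intro v
        rw [← ContinuousLinearMap.adjoint_inner_left, hadj]
        simp
    exact hf (inner_self_eq_zero.mp (h0 f))
  have hstrict : ∀ f : H, f ≠ 0 → 0 < ⟪S f, f⟫ := by
    intro f hf
    rw [hSB]
    have h1 : c * ‖T f‖ ^ 2 ≤ B (T f) (T f) := by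
      rw [hBapp]; exact hell (T f)
    have h2 : 0 < ‖T f‖ := norm_pos_iff.mpr (hTne f hf)
    nlinarith [mul_pos hc (pow_pos h2 2)]
  -- Zorn's lemma: a maximal orthonormal set of eigenvectors
  set P : Set H → Prop := fun s =>
    (∀ v ∈ s, ‖v‖ = 1) ∧ (∀ v ∈ s, ∀ w ∈ s, v ≠ w → ⟪v, w⟫ = 0) ∧
    (∀ x ∈ s, ∃ μ : ℝ, 0 < μ ∧ S x = μ • x) with hPdef
  obtain ⟨s, hsmax⟩ : ∃ s, Maximal (· ∈ {t : Set H | P t}) s := by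
    apply zorn_subset
    intro ch hch hchain
    refine ⟨⋃₀ ch, ⟨?_, ?_, ?_⟩, fun t ht => Set.subset_sUnion_of_mem ht⟩
    · rintro v ⟨t, ht, hvt⟩
      exact (hch ht).1 v hvt
    · rintro v ⟨t, ht, hvt⟩ w ⟨t', ht', hwt'⟩ hvw
      rcases hchain.total ht ht' with h | h
      · exact (hch ht').2.1 v (h hvt) w hwt' hvw
      · exact (hch ht).2.1 v hvt w (h hwt') hvw
    · rintro x ⟨t, ht, hxt⟩
      exact (hch ht).2.2 x hxt
  have hsP : P s := hsmax.1
  set W : Submodule ℝ H := Submodule.span ℝ s with hWdef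
  -- maximality forces dense span
  have hWbot : Wᗮ = ⊥ := by
    by_contra hne
    have hKc : IsClosed ((Wᗮ : Submodule ℝ H) : Set H) := Submodule.isClosed_orthogonal W
    have hKinv : ∀ x ∈ Wᗮ, S x ∈ Wᗮ := by
      intro x hx
      rw [Submodule.mem_orthogonal]
      intro u hu
      refine Submodule.span_induction (p := fun y _ => ⟪y, S x⟫ = 0) ?_ ?_ ?_ ?_ hu
      · intro y hy
        obtain ⟨μ, hμ, hSy⟩ := hsP.2.2 y hy
        have h1 : ⟪y, S x⟫ = ⟪S y, x⟫ := (hSsym y x).symm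
        have h2 : ⟪y, x⟫ = 0 :=
          (Submodule.mem_orthogonal W x).mp hx y (Submodule.subset_span hy)
        rw [h1, hSy, real_inner_smul_left, h2, mul_zero]
      · exact inner_zero_left _
      · intro y z _ _ hy hz
        rw [inner_add_left, hy, hz, add_zero]
      · intro r y _ hy
        rw [real_inner_smul_left, hy, mul_zero]
    obtain ⟨e0, he0K, he0n, μ0, hμ0, hSe0⟩ :=
      aux_eigen S hScomp hSsym hstrict Wᗮ hKc hKinv hne
    have he0s : e0 ∉ s := by
      intro he0s
      have h1 : ⟪e0, e0⟫ = 0 :=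
        (Submodule.mem_orthogonal W e0).mp he0K e0 (Submodule.subset_span he0s)
      rw [real_inner_self_eq_norm_sq, he0n] at h1
      norm_num at h1
    have hP' : P (insert e0 s) := by
      refine ⟨?_, ?_, ?_⟩
      · rintro v (rfl | hv)
        · exact he0n
        · exact hsP.1 v hv
      · rintro v (rfl | hv) w (rfl | hw) hvw
        · exact absurd rfl hvw
        · rw [real_inner_comm]
          exact (Submodule.mem_orthogonal W v).mp he0K w (Submodule.subset_span hw)
        · exact (Submodule.mem_orthogonal W w).mp he0K v (Submodule.subset_span hv)
        · exact hsP.2.1 v hv w hw hvw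
      · rintro x (rfl | hx)
        · exact ⟨μ0, hμ0, hSe0⟩
        · exact hsP.2.2 x hx
    exact he0s (hsmax.2 hP' (Set.subset_insert e0 s) (Set.mem_insert e0 s))
  have hWcl : W.topologicalClosure = ⊤ := Submodule.topologicalClosure_eq_top_iff.mpr hWbot
  -- s is countable
  have hdist2 : ∀ v w : H, v ∈ s → w ∈ s → v ≠ w → dist v w ^ 2 = 2 := by
    intro v w hv hw hvw
    rw [dist_eq_norm, norm_sub_sq_real, hsP.2.1 v hv w hw hvw, hsP.1 v hv, hsP.1 w hw]
    norm_num
  have hs_count : Countable ↥s := by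
    obtain ⟨D, hDc, hDd⟩ := TopologicalSpace.exists_countable_dense H
    have hchoice : ∀ v : ↥s, ∃ d : H, d ∈ D ∧ dist (v : H) d < 1/2 := by
      intro v
      obtain ⟨d, hd1, hd2⟩ := hDd.exists_dist_lt (v : H) (by norm_num : (0:ℝ) < 1/2)
      exact ⟨d, hd1, hd2⟩
    choose d hdD hdlt using hchoice
    haveI : Countable ↥D := hDc.to_subtype
    have hdinj : Function.Injective (fun v : ↥s => (⟨d v, hdD v⟩ : ↥D)) := by
      intro v w hvw
      have hdd : d v = d w := congrArg Subtype.val hvw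
      by_contra hne
      have hvals : (v : H) ≠ (w : H) := fun h => hne (Subtype.ext h)
      have h2 := hdist2 (v : H) (w : H) v.2 w.2 hvals
      have h3 : dist (v : H) (w : H) ≤ dist (v : H) (d v) + dist (d w) (w : H) := by
        rw [hdd]
        exact dist_triangle _ _ _
      have h4 := hdlt v
      have h5 := hdlt w
      rw [dist_comm (d w) (w : H)] at h3
      nlinarith [dist_nonneg (x := (v:H)) (y := (w:H))]
    exact Function.Injective.countable hdinj
  have hs_inf : Infinite ↥s := by
    by_contra hfin
    rw [not_infinite_iff_finite] at hfin
    have hsfin : s.Finite := Set.finite_coe_iff.mp hfin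
    have hfd : FiniteDimensional ℝ ↥W := FiniteDimensional.span_of_finite ℝ hsfin
    have hWclosed : IsClosed (W : Set H) := Submodule.closed_of_finiteDimensional W
    have hle : W.topologicalClosure ≤ W := Submodule.topologicalClosure_minimal W le_rfl hWclosed
    have hWt : W = ⊤ := le_antisymm le_top (hWcl ▸ hle)
    haveI : FiniteDimensional ℝ ↥(⊤ : Submodule ℝ H) := hWt ▸ hfd
    exact hinf (Submodule.topEquiv.finiteDimensional)
  obtain ⟨dd⟩ := nonempty_denumerable ↥s
  set g : ℕ ≃ ↥s := (Denumerable.eqv ↥s).symm with hgdef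
  set e' : ℕ → H := fun n => ((g n : ↥s) : H) with he'def
  have he'inj : Function.Injective e' := fun m n h => g.injective (Subtype.ext h)
  have he's : ∀ n, e' n ∈ s := fun n => (g n).2
  have hon : Orthonormal ℝ e' := by
    rw [orthonormal_iff_ite]
    intro i k
    by_cases h : i = k
    · subst h
      simp only [if_true]
      rw [real_inner_self_eq_norm_sq, hsP.1 _ (he's i)]
      norm_num
    · rw [if_neg h]
      exact hsP.2.1 _ (he's i) _ (he's k) (fun hh => h (he'inj hh))
  have heigex : ∀ n, ∃ μ : ℝ, 0 < μ ∧ S (e' n) = μ • e' n := fun n => hsP.2.2 _ (he's n)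
  choose μ' hμpos heig using heigex
  have hfin := aux_finite S hScomp e' hon μ' heig
  obtain ⟨F, hFbij, hanti, htend0⟩ := aux_sort μ' hμpos hfin
  have honF : Orthonormal ℝ (fun k => e' (F k)) := hon.comp F hFbij.1
  have hrangeF : Set.range (fun k => e' (F k)) = s := by
    have h1 : Set.range (fun k => e' (F k)) = e' '' Set.range F := Set.range_comp e' F
    rw [h1, hFbij.2.range_eq, Set.image_univ]
    ext x
    constructor
    · rintro ⟨n, rfl⟩
      exact he's n
    · intro hx
      exact ⟨g.symm ⟨x, hx⟩, by simp [he'def]⟩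
  have hsp : ⊤ ≤ (Submodule.span ℝ (Set.range fun k => e' (F k))).topologicalClosure := by
    rw [hrangeF, ← hWdef, hWcl]
  set eb : HilbertBasis ℕ ℝ H := HilbertBasis.mk honF hsp with hebdef
  have hek : ∀ k, eb k = e' (F k) := fun k => congrFun (HilbertBasis.coe_mk honF hsp) k
  set ψ : ℕ → V := fun k => (μ' (F k))⁻¹ • T (e' (F k)) with hψdef
  set Λ : ℕ → ℝ := fun k => (μ' (F k))⁻¹ - ω with hΛdef
  have hmono : Monotone Λ := by
    intro k l hkl
    have h1 : μ' (F l) ≤ μ' (F k) := hanti hkl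
    have h2 : (μ' (F k))⁻¹ ≤ (μ' (F l))⁻¹ := by
      apply inv_anti₀ (hμpos (F l)) h1
    simp only [hΛdef]
    linarith
  have htend : Tendsto Λ atTop atTop := by
    have h1 : Tendsto (fun k => μ' (F k)) atTop (𝓝[>] 0) :=
      tendsto_nhdsWithin_iff.mpr ⟨htend0, Eventually.of_forall fun k => hμpos (F k)⟩
    have h2 := h1.inv_tendsto_nhdsGT_zero
    have h3 := tendsto_atTop_add_const_right atTop (-ω) h2
    simpa only [hΛdef, Pi.inv_apply, sub_eq_add_neg] using h3
  refine ⟨eb, ψ, Λ, hmono, htend, fun k => ?_⟩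
  have hjψ : j (ψ k) = e' (F k) := by
    rw [hψdef]
    simp only [map_smul]
    rw [← hSapp, heig, smul_smul, inv_mul_cancel₀ (hμpos (F k)).ne', one_smul]
  constructor
  · rw [hjψ, hek]
  · intro u
    have hB1 : B (ψ k) u = (μ' (F k))⁻¹ * ⟪e' (F k), j u⟫ := by
      rw [hψdef]
      simp only [map_smul, ContinuousLinearMap.smul_apply, smul_eq_mul]
      rw [hT]
    have hB2 : B (ψ k) u = a (ψ k) u + ω * ⟪j (ψ k), j u⟫ := hBapp _ _
    rw [hjψ] at hB2
    rw [hek]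
    have : a (ψ k) u = (μ' (F k))⁻¹ * ⟪e' (F k), j u⟫ - ω * ⟪e' (F k), j u⟫ := by
      rw [← hB1, hB2]; ring
    rw [this, hΛdef]
    ring
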